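/- The rank invariant is not a complete invariant of 2-D persistence modules: there exist a field K and two pointwise finite dimensional 2-D persistence modules M and N over K such that M and N are not isomorphic (as functors from the poset ℝ² to K-vector spaces), yet their rank invariants are equal, i.e., for all a ≤ b in ℝ², the rank of M(a ≤ b) equals the rank of N(a ≤ b). -/

import Mathlib

/-- A 2-D persistence module over a field `K`: a functor from the poset `ℝ²`
(with the product order) to the category of `K`-vector spaces, given by a vector
space `V a` for each `a : ℝ × ℝ` and a linear map `map h : V a →ₗ[K] V b` for each
`h : a ≤ b`, functorially. -/
structure PersistenceModule2D (K : Type) [Field K] where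
  V : ℝ × ℝ → Type
  [addCommGroup : ∀ a, AddCommGroup (V a)]
  [module : ∀ a, Module K (V a)]
  map : ∀ {a b : ℝ × ℝ}, a ≤ b → (V a →ₗ[K] V b)
  map_id : ∀ a : ℝ × ℝ, map (le_refl a) = LinearMap.id
  map_comp : ∀ {a b c : ℝ × ℝ} (hab : a ≤ b) (hbc : b ≤ c),
    map (le_trans hab hbc) = (map hbc).comp (map hab)

attribute [instance] PersistenceModule2D.addCommGroup PersistenceModule2D.module

open scoped Classical

namespace RInc

noncomputable def sub (S : Set (ℝ × ℝ)) (a : ℝ × ℝ) : Submodule ℚ ℚ :=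
  if a ∈ S then ⊤ else ⊥

lemma sub_of_mem {S : Set (ℝ × ℝ)} {a : ℝ × ℝ} (h : a ∈ S) : sub S a = ⊤ := if_pos h

lemma sub_of_not_mem {S : Set (ℝ × ℝ)} {a : ℝ × ℝ} (h : a ∉ S) : sub S a = ⊥ := if_neg h

noncomputable def imap (S : Set (ℝ × ℝ)) (a b : ℝ × ℝ) :
    ↥(sub S a) →ₗ[ℚ] ↥(sub S b) :=
  if h : sub S a ≤ sub S b then Submodule.inclusion h else 0

lemma imap_val (S : Set (ℝ × ℝ)) (a b : ℝ × ℝ) (x : ↥(sub S a)) :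
    (imap S a b x : ℚ) = if b ∈ S then (x : ℚ) else 0 := by
  unfold imap
  by_cases hle : sub S a ≤ sub S b
  · rw [dif_pos hle]
    by_cases hb : b ∈ S
    · rw [if_pos hb]; rfl
    · rw [if_neg hb]
      have : (x : ℚ) ∈ (⊥ : Submodule ℚ ℚ) := by
        rw [← sub_of_not_mem hb]; exact hle x.2
      simpa using this
  · rw [dif_neg hle]
    by_cases hb : b ∈ S
    · exact absurd (by rw [sub_of_mem hb]; exact le_top) hle
    · rw [if_neg hb]; rfl

/-- interval module on an order-convex set S -/
noncomputable def imod (S : Set (ℝ × ℝ))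
    (hS : ∀ {a b c : ℝ × ℝ}, a ≤ b → b ≤ c → a ∈ S → c ∈ S → b ∈ S) :
    PersistenceModule2D ℚ where
  V a := ↥(sub S a)
  map {a b} _ := imap S a b
  map_id a := by
    show imap S a a = LinearMap.id
    unfold imap
    rw [dif_pos le_rfl]
    rfl
  map_comp {a b c} hab hbc := by
    show imap S a c = (imap S b c).comp (imap S a b)
    ext x
    simp only [LinearMap.comp_apply]
    rw [imap_val, imap_val, imap_val]
    by_cases hc : c ∈ S
    · rw [if_pos hc, if_pos hc]
      by_cases hb : b ∈ S
      · rw [if_pos hb]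
      · rw [if_neg hb]
        by_cases ha : a ∈ S
        · exact absurd (hS hab hbc ha hc) hb
        · have : (x : ℚ) ∈ (⊥ : Submodule ℚ ℚ) := by
            rw [← sub_of_not_mem ha]; exact x.2
          simpa using this
    · rw [if_neg hc, if_neg hc]

lemma imod_map (S : Set (ℝ × ℝ))
    (hS : ∀ {a b c : ℝ × ℝ}, a ≤ b → b ≤ c → a ∈ S → c ∈ S → b ∈ S)
    {a b : ℝ × ℝ} (h : a ≤ b) :
    (imod S hS).map h = imap S a b := rfl

lemma imod_rank (S : Set (ℝ × ℝ))
    (hS : ∀ {a b c : ℝ × ℝ}, a ≤ b → b ≤ c → a ∈ S → c ∈ S → b ∈ S)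
    {a b : ℝ × ℝ} (h : a ≤ b) :
    LinearMap.rank ((imod S hS).map h) = if a ∈ S ∧ b ∈ S then 1 else 0 := by
  rw [imod_map]
  by_cases hab : a ∈ S ∧ b ∈ S
  · rw [if_pos hab]
    have hsurj : Function.Surjective (imap S a b) := by
      intro y
      have hya : (y : ℚ) ∈ sub S a := by rw [sub_of_mem hab.1]; trivial
      refine ⟨⟨(y : ℚ), hya⟩, ?_⟩
      apply Subtype.ext
      rw [imap_val, if_pos hab.2]
    show Module.rank ℚ ↥(LinearMap.range (imap S a b)) = 1
    rw [rank_range_of_surjective _ hsurj, sub_of_mem hab.2, rank_top, Module.rank_self]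
  · rw [if_neg hab]
    have hzero : imap S a b = 0 := by
      ext x
      rw [imap_val]
      by_cases hb : b ∈ S
      · rw [if_pos hb]
        have ha : a ∉ S := fun ha => hab ⟨ha, hb⟩
        have : (x : ℚ) ∈ (⊥ : Submodule ℚ ℚ) := by
          rw [← sub_of_not_mem ha]; exact x.2
        simpa using this
      · rw [if_neg hb]; rfl
    rw [hzero]; exact LinearMap.rank_zero

/-- direct sum of two persistence modules -/
noncomputable def pmod (A B : PersistenceModule2D ℚ) : PersistenceModule2D ℚ where
  V a := A.V a × B.V a
  map {a b} h := (A.map h).prodMap (B.map h)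
  map_id a := by
    show (A.map (le_refl a)).prodMap (B.map (le_refl a)) = LinearMap.id
    rw [A.map_id, B.map_id]
    exact LinearMap.prodMap_id
  map_comp {a b c} hab hbc := by
    show (A.map _).prodMap (B.map _) =
      ((A.map hbc).prodMap (B.map hbc)).comp ((A.map hab).prodMap (B.map hab))
    rw [A.map_comp hab hbc, B.map_comp hab hbc, LinearMap.prodMap_comp]

lemma pmod_map (A B : PersistenceModule2D ℚ) {a b : ℝ × ℝ} (h : a ≤ b) :
    (pmod A B).map h = (A.map h).prodMap (B.map h) := rfl

/-- equivalence between a product submodule and the product of submodules -/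
noncomputable def prodSubEquiv {M N : Type} [AddCommGroup M] [AddCommGroup N]
    [Module ℚ M] [Module ℚ N] (p : Submodule ℚ M) (q : Submodule ℚ N) :
    ↥(p.prod q) ≃ₗ[ℚ] ↥p × ↥q where
  toFun x := (⟨x.1.1, x.2.1⟩, ⟨x.1.2, x.2.2⟩)
  invFun y := ⟨(y.1.1, y.2.1), ⟨y.1.2, y.2.2⟩⟩
  map_add' x y := rfl
  map_smul' c x := rfl
  left_inv x := rfl
  right_inv y := rfl

lemma range_prodMap {M N P Q : Type} [AddCommGroup M] [AddCommGroup N]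
    [AddCommGroup P] [AddCommGroup Q] [Module ℚ M] [Module ℚ N] [Module ℚ P] [Module ℚ Q]
    (f : M →ₗ[ℚ] P) (g : N →ₗ[ℚ] Q) :
    LinearMap.range (f.prodMap g) = (LinearMap.range f).prod (LinearMap.range g) := by
  ext y
  simp only [LinearMap.mem_range, Submodule.mem_prod, LinearMap.prodMap_apply, Prod.ext_iff]
  constructor
  · rintro ⟨x, h1, h2⟩
    exact ⟨⟨x.1, h1⟩, ⟨x.2, h2⟩⟩
  · rintro ⟨⟨x1, h1⟩, ⟨x2, h2⟩⟩
    exact ⟨(x1, x2), h1, h2⟩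

lemma rank_prodMap {M N P Q : Type} [AddCommGroup M] [AddCommGroup N]
    [AddCommGroup P] [AddCommGroup Q] [Module ℚ M] [Module ℚ N] [Module ℚ P] [Module ℚ Q]
    (f : M →ₗ[ℚ] P) (g : N →ₗ[ℚ] Q) :
    LinearMap.rank (f.prodMap g) = LinearMap.rank f + LinearMap.rank g := by
  show Module.rank ℚ ↥(LinearMap.range (f.prodMap g)) = _
  rw [range_prodMap, (prodSubEquiv (LinearMap.range f) (LinearMap.range g)).rank_eq, rank_prod']

def Vs : Set (ℝ × ℝ) := {p | 0 ≤ p.1 ∧ p.1 < 1 ∧ 0 ≤ p.2}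
def Hs : Set (ℝ × ℝ) := {p | 0 ≤ p.1 ∧ 0 ≤ p.2 ∧ p.2 < 1}

lemma convex_Vs : ∀ {a b c : ℝ × ℝ}, a ≤ b → b ≤ c → a ∈ Vs → c ∈ Vs → b ∈ Vs := by
  rintro a b c ⟨h1, h2⟩ ⟨h3, h4⟩ ⟨ha1, ha2, ha3⟩ ⟨hc1, hc2, hc3⟩
  exact ⟨le_trans ha1 h1, lt_of_le_of_lt h3 hc2, le_trans ha3 h2⟩

lemma convex_Hs : ∀ {a b c : ℝ × ℝ}, a ≤ b → b ≤ c → a ∈ Hs → c ∈ Hs → b ∈ Hs := by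
  rintro a b c ⟨h1, h2⟩ ⟨h3, h4⟩ ⟨ha1, ha2, ha3⟩ ⟨hc1, hc2, hc3⟩
  exact ⟨le_trans ha1 h1, le_trans ha2 h2, lt_of_le_of_lt h4 hc3⟩

lemma convex_U : ∀ {a b c : ℝ × ℝ}, a ≤ b → b ≤ c → a ∈ Vs ∪ Hs → c ∈ Vs ∪ Hs →
    b ∈ Vs ∪ Hs := by
  rintro a b c ⟨h1, h2⟩ ⟨h3, h4⟩ ha hc
  have hb1 : 0 ≤ b.1 := by
    rcases ha with ⟨ha1, _, _⟩ | ⟨ha1, _, _⟩ <;> linarith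
  have hb2 : 0 ≤ b.2 := by
    rcases ha with ⟨_, _, ha2⟩ | ⟨_, ha2, _⟩ <;> linarith
  rcases hc with ⟨_, hc2, _⟩ | ⟨_, _, hc3⟩
  · exact Or.inl ⟨hb1, lt_of_le_of_lt h3 hc2, hb2⟩
  · exact Or.inr ⟨hb1, hb2, lt_of_le_of_lt h4 hc3⟩

lemma convex_W : ∀ {a b c : ℝ × ℝ}, a ≤ b → b ≤ c → a ∈ Vs ∩ Hs → c ∈ Vs ∩ Hs →
    b ∈ Vs ∩ Hs := fun hab hbc ha hc =>
  ⟨convex_Vs hab hbc ha.1 hc.1, convex_Hs hab hbc ha.2 hc.2⟩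

noncomputable def Mmod : PersistenceModule2D ℚ :=
  pmod (imod Vs convex_Vs) (imod Hs convex_Hs)

noncomputable def Nmod : PersistenceModule2D ℚ :=
  pmod (imod (Vs ∪ Hs) convex_U) (imod (Vs ∩ Hs) convex_W)

lemma hpV : ((0:ℝ),(0:ℝ)) ∈ Vs := ⟨le_refl _, by norm_num, le_refl _⟩
lemma hpH : ((0:ℝ),(0:ℝ)) ∈ Hs := ⟨le_refl _, le_refl _, by norm_num⟩
lemma hq1V : ((0:ℝ),(1:ℝ)) ∈ Vs := ⟨le_refl _, by norm_num, by norm_num⟩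
lemma hq1nH : ((0:ℝ),(1:ℝ)) ∉ Hs := fun hmem => absurd hmem.2.2 (by norm_num)
lemma hq2H : ((1:ℝ),(0:ℝ)) ∈ Hs := ⟨by norm_num, le_refl _, by norm_num⟩
lemma hq2nV : ((1:ℝ),(0:ℝ)) ∉ Vs := fun hmem => absurd hmem.2.1 (by norm_num)

lemma not_iso : ¬ ∃ φ : ∀ a : ℝ × ℝ, Mmod.V a ≃ₗ[ℚ] Nmod.V a,
    ∀ (a b : ℝ × ℝ) (h : a ≤ b) (x : Mmod.V a),
      φ b (Mmod.map h x) = Nmod.map h (φ a x) := by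
  rintro ⟨φ, hφ⟩
  have h1 : ((0:ℝ),(0:ℝ)) ≤ ((0:ℝ),(1:ℝ)) := Prod.mk_le_mk.mpr ⟨le_refl _, by norm_num⟩
  have h2 : ((0:ℝ),(0:ℝ)) ≤ ((1:ℝ),(0:ℝ)) := Prod.mk_le_mk.mpr ⟨by norm_num, le_refl _⟩
  have hy2mem : (1:ℚ) ∈ sub (Vs ∩ Hs) ((0:ℝ),(0:ℝ)) := by
    rw [sub_of_mem (Set.mem_inter hpV hpH)]; trivial
  let y : Nmod.V ((0:ℝ),(0:ℝ)) := (0, ⟨1, hy2mem⟩)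
  -- N kills y along any map leaving Vs ∩ Hs
  have hNy : ∀ (b : ℝ × ℝ) (h : ((0:ℝ),(0:ℝ)) ≤ b), b ∉ Vs ∩ Hs → Nmod.map h y = 0 := by
    intro b h hb
    have e2 : imap (Vs ∩ Hs) ((0:ℝ),(0:ℝ)) b ⟨1, hy2mem⟩ = 0 := by
      apply Subtype.ext
      rw [imap_val, if_neg hb]
      rfl
    show (imap (Vs ∪ Hs) ((0:ℝ),(0:ℝ)) b 0, imap (Vs ∩ Hs) ((0:ℝ),(0:ℝ)) b ⟨1, hy2mem⟩) = 0
    rw [map_zero, e2]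
    rfl
  have hMx : ∀ (b : ℝ × ℝ) (h : ((0:ℝ),(0:ℝ)) ≤ b), b ∉ Vs ∩ Hs →
      Mmod.map h ((φ ((0:ℝ),(0:ℝ))).symm y) = 0 := by
    intro b h hb
    have key := hφ _ _ h ((φ ((0:ℝ),(0:ℝ))).symm y)
    rw [(φ _).apply_symm_apply, hNy b h hb] at key
    exact (φ b).map_eq_zero_iff.mp key
  -- split the preimage into components
  obtain ⟨⟨x1, x2⟩, hx⟩ : ∃ z : ↥(sub Vs ((0:ℝ),(0:ℝ))) × ↥(sub Hs ((0:ℝ),(0:ℝ))),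
      (φ ((0:ℝ),(0:ℝ))).symm y = z := ⟨(φ ((0:ℝ),(0:ℝ))).symm y, rfl⟩
  have hM1 := hMx _ h1 (fun hmem => hq1nH hmem.2)
  have hM2 := hMx _ h2 (fun hmem => hq2nV hmem.1)
  rw [hx] at hM1 hM2
  have c1 : imap Vs ((0:ℝ),(0:ℝ)) ((0:ℝ),(1:ℝ)) x1 = 0 := congrArg Prod.fst hM1
  have c2 : imap Hs ((0:ℝ),(0:ℝ)) ((1:ℝ),(0:ℝ)) x2 = 0 := congrArg Prod.snd hM2
  have v1 : (x1 : ℚ) = 0 := by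
    have := congrArg Subtype.val c1
    rwa [imap_val, if_pos hq1V] at this
  have v2 : (x2 : ℚ) = 0 := by
    have := congrArg Subtype.val c2
    rwa [imap_val, if_pos hq2H] at this
  have hz : (φ ((0:ℝ),(0:ℝ))).symm y = 0 := by
    rw [hx]
    show ((x1 : ↥(sub Vs ((0:ℝ),(0:ℝ)))), (x2 : ↥(sub Hs ((0:ℝ),(0:ℝ))))) =
      ((0 : ↥(sub Vs ((0:ℝ),(0:ℝ)))), (0 : ↥(sub Hs ((0:ℝ),(0:ℝ)))))
    rw [Subtype.ext (v1.trans (ZeroMemClass.coe_zero _).symm),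
      Subtype.ext (v2.trans (ZeroMemClass.coe_zero _).symm)]
  have hy0 : y = 0 := by
    have := (φ ((0:ℝ),(0:ℝ))).apply_symm_apply y
    rw [hz, map_zero] at this
    exact this.symm
  have hcontra : (1 : ℚ) = 0 := congrArg Subtype.val (congrArg Prod.snd hy0)
  exact one_ne_zero hcontra

lemma rank_eq : ∀ (a b : ℝ × ℝ) (h : a ≤ b),
    LinearMap.rank (Mmod.map h) = LinearMap.rank (Nmod.map h) := by
  intro a b h
  show LinearMap.rank ((pmod _ _).map h) = LinearMap.rank ((pmod _ _).map h)
  rw [pmod_map, pmod_map]; erw [rank_prodMap, rank_prodMap, imod_rank, imod_rank,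
    imod_rank, imod_rank]
  by_cases haV : a ∈ Vs <;> by_cases hbV : b ∈ Vs <;>
    by_cases haH : a ∈ Hs <;> by_cases hbH : b ∈ Hs
  all_goals first
    | exact absurd (show a ∈ Hs from ⟨haV.1, haV.2.2, lt_of_le_of_lt h.2 hbH.2.2⟩) haH
    | exact absurd (show a ∈ Vs from ⟨haH.1, lt_of_le_of_lt h.1 hbV.2.1, haH.2.1⟩) haV
    | simp [Set.mem_union, Set.mem_inter_iff, haV, hbV, haH, hbH]

end RInc


/-- The rank invariant is not a complete invariant of 2-D persistence
modules: there exist a field `K` and two pointwise finite dimensional 2-D persistence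
modules `M`, `N` over `K` which are not isomorphic (i.e., there is no natural
isomorphism between them, as functors from the poset `ℝ²` to `K`-vector spaces), yet
for all `a ≤ b` in `ℝ²` the ranks of `M(a ≤ b)` and `N(a ≤ b)` agree. -/
theorem rank_invariant_not_complete :
    ∃ (K : Type) (_ : Field K) (M N : PersistenceModule2D K),
      (∀ a : ℝ × ℝ, FiniteDimensional K (M.V a)) ∧
      (∀ a : ℝ × ℝ, FiniteDimensional K (N.V a)) ∧
      (¬ ∃ φ : ∀ a : ℝ × ℝ, M.V a ≃ₗ[K] N.V a,
        ∀ (a b : ℝ × ℝ) (h : a ≤ b) (x : M.V a),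
          φ b (M.map h x) = N.map h (φ a x)) ∧
      (∀ (a b : ℝ × ℝ) (h : a ≤ b),
        LinearMap.rank (M.map h) = LinearMap.rank (N.map h)) := by
  classical
  refine ⟨ℚ, inferInstance,
    RInc.Mmod, RInc.Nmod,
    ?_, ?_, ?_, ?_⟩
  · intro a; exact inferInstanceAs (FiniteDimensional ℚ (↥(RInc.sub _ a) × ↥(RInc.sub _ a)))
  · intro a; exact inferInstanceAs (FiniteDimensional ℚ (↥(RInc.sub _ a) × ↥(RInc.sub _ a)))
  · exact RInc.not_iso
  · exact RInc.rank_eq
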